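/- Let d be a digit not in {1,2,4,6}. Suppose T = k ∥ dd where the digit string k satisfies property P (all run base digits in {1,2,4,6}, all run lengths in {2,4,6}) and the last run of k has base digit 2. Then LSA(T) = k' ∥ dd where k' satisfies P and the last run of k' has base digit 2. -/

import Mathlib

/-- Run-length encoding of a digit string (a list of digits). -/
def rle : List ℕ → List (ℕ × ℕ)
  | [] => []
  | a :: t =>
    match rle t with
    | [] => [(a, 1)]
    | (b, n) :: r => if a = b then (a, n + 1) :: r else (a, 1) :: (b, n) :: r

/-- `P` is a run-length representation of the digit string `S`:
multiplicities are positive, adjacent base digits are distinct, and `S` is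
the concatenation of the runs. -/
def IsRLE (S : List ℕ) (P : List (ℕ × ℕ)) : Prop :=
  (∀ p ∈ P, 1 ≤ p.2) ∧ List.Chain' (fun p q => p.1 ≠ q.1) P ∧
    S = (P.map fun p => List.replicate p.2 p.1).flatten

/-- The look-and-say-again step: each run `a^n` is read off as `n n a a`. -/
def lsa (T : List ℕ) : List ℕ := (rle T).flatMap fun p => [p.2, p.2, p.1, p.1]

/-- Property `P`: every run has base digit in `{1,2,4,6}` and length in `{2,4,6}`. -/
def propP (T : List ℕ) : Prop :=
  ∀ p ∈ rle T, p.1 ∈ ({1, 2, 4, 6} : Set ℕ) ∧ p.2 ∈ ({2, 4, 6} : Set ℕ)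

lemma rle_isRLE : ∀ l : List ℕ, IsRLE l (rle l)
  | [] => ⟨by simp [rle], List.isChain_nil, by simp [rle]⟩
  | a :: t => by
    obtain ⟨hpos, hch, hfl⟩ := rle_isRLE t
    rw [show rle (a :: t) = match rle t with
      | [] => [(a, 1)]
      | (b, n) :: r => if a = b then (a, n + 1) :: r else (a, 1) :: (b, n) :: r from rfl]
    cases h : rle t with
    | nil =>
      rw [h] at hfl; simp at hfl; subst hfl
      exact ⟨by simp, List.isChain_singleton _, by simp⟩
    | cons p r =>
      obtain ⟨b, m⟩ := p
      rw [h] at hpos hch hfl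
      by_cases hab : a = b
      · subst hab
        simp only [if_pos rfl]
        refine ⟨?_, ?_, ?_⟩
        · intro q hq
          rcases List.mem_cons.1 hq with h1 | h1
          · subst h1; simp
          · exact hpos q (List.mem_cons_of_mem _ h1)
        · rcases List.isChain_cons.1 hch with ⟨h1, h2⟩
          exact List.isChain_cons.2 ⟨h1, h2⟩
        · simp only [List.map_cons, List.flatten_cons] at hfl ⊢
          rw [hfl]; simp [List.replicate_succ]
      · simp only [if_neg hab]
        refine ⟨?_, ?_, ?_⟩
        · intro q hq
          rcases List.mem_cons.1 hq with h1 | h1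
          · subst h1; simp
          · exact hpos q h1
        · exact List.isChain_cons.2 ⟨by rintro y hy; simp at hy; subst hy; exact hab, hch⟩
        · simp only [List.map_cons, List.flatten_cons] at hfl ⊢
          rw [hfl]; simp

lemma rle_replicate_append (a : ℕ) : ∀ n, 1 ≤ n → ∀ t : List ℕ,
    (∀ b m r, rle t = (b, m) :: r → a ≠ b) →
    rle (List.replicate n a ++ t) = (a, n) :: rle t
  | 0, h, _, _ => by omega
  | 1, _, t, h => by
    rw [show List.replicate 1 a ++ t = a :: t from by simp]
    rw [show rle (a :: t) = match rle t with
      | [] => [(a, 1)]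
      | (b, n) :: r => if a = b then (a, n + 1) :: r else (a, 1) :: (b, n) :: r from rfl]
    cases ht : rle t with
    | nil => simp
    | cons p r =>
      obtain ⟨b, m⟩ := p
      simp [if_neg (h b m r ht)]
  | n + 2, _, t, h => by
    have ih := rle_replicate_append a (n + 1) (by omega) t h
    rw [show List.replicate (n + 2) a ++ t = a :: (List.replicate (n + 1) a ++ t) from by
      simp [List.replicate_succ]]
    rw [show rle (a :: (List.replicate (n + 1) a ++ t)) =
      match rle (List.replicate (n + 1) a ++ t) with
      | [] => [(a, 1)]
      | (b, n) :: r => if a = b then (a, n + 1) :: r else (a, 1) :: (b, n) :: r from rfl]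
    rw [ih]
    simp

lemma rle_eq_of_isRLE : ∀ (P : List (ℕ × ℕ)) (S : List ℕ), IsRLE S P → rle S = P
  | [], S, ⟨_, _, hfl⟩ => by simp at hfl; subst hfl; simp [rle]
  | (a, n) :: P', S, ⟨hpos, hch, hfl⟩ => by
    have hP' : rle ((P'.map fun p => List.replicate p.2 p.1).flatten) = P' :=
      rle_eq_of_isRLE P' _ ⟨fun p hp => hpos p (List.mem_cons_of_mem _ hp), hch.tail, rfl⟩
    simp only [List.map_cons, List.flatten_cons] at hfl
    rw [hfl, rle_replicate_append a n (hpos (a, n) (by simp)) _ ?_, hP']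
    intro b m r hbr
    rw [hP'] at hbr
    subst hbr
    exact List.isChain_cons_cons.1 hch |>.1

lemma nf_w : ∀ (R : List (ℕ × ℕ)), List.Chain' (fun p q => p.1 ≠ q.1) R → ∀ x : ℕ,
    ¬ ([x, x, x, x] <:+: (R.flatMap fun p => [p.2, p.1]) ++ [2])
  | [], _, x, h => by simp at h; have := h.length_le; simp at this
  | [p], _, x, h => by have := h.length_le; simp at this
  | p :: q :: R', hch, x, h => by
    have ih := nf_w (q :: R') hch.tail x
    rw [show ((p :: q :: R').flatMap fun p => [p.2, p.1]) ++ [2]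
        = p.2 :: p.1 :: (((q :: R').flatMap fun p => [p.2, p.1]) ++ [2]) from by simp] at h
    have hpq : p.1 ≠ q.1 := List.isChain_cons_cons.1 hch |>.1
    rcases List.infix_cons_iff.1 h with h1 | h1
    · rw [show ((q :: R').flatMap fun p => [p.2, p.1]) ++ [2]
          = q.2 :: q.1 :: ((R'.flatMap fun p => [p.2, p.1]) ++ [2]) from by simp] at h1
      simp only [List.cons_prefix_cons] at h1
      exact hpq (h1.2.1.symm.trans h1.2.2.2.1)
    rcases List.infix_cons_iff.1 h1 with h2 | h2
    · rw [show ((q :: R').flatMap fun p => [p.2, p.1]) ++ [2]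
          = q.2 :: q.1 :: ((R'.flatMap fun p => [p.2, p.1]) ++ [2]) from by simp] at h2
      simp only [List.cons_prefix_cons] at h2
      exact hpq (h2.1.symm.trans h2.2.2.1)
    exact ih h2

lemma rle_last : ∀ (l : List ℕ) (a : ℕ), ∃ n, (rle (l ++ [a])).getLast? = some (a, n)
  | [], a => ⟨1, by simp [rle]⟩
  | x :: l, a => by
    obtain ⟨n, hn⟩ := rle_last l a
    rw [show (x :: l) ++ [a] = x :: (l ++ [a]) from rfl]
    rw [show rle (x :: (l ++ [a])) = match rle (l ++ [a]) with
      | [] => [(x, 1)]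
      | (b, m) :: r => if x = b then (x, m + 1) :: r else (x, 1) :: (b, m) :: r from rfl]
    cases h : rle (l ++ [a]) with
    | nil => rw [h] at hn; simp at hn
    | cons p r =>
      obtain ⟨b, m⟩ := p
      rw [h] at hn
      rw [show (match (b, m) :: r with
          | [] => [(x, 1)]
          | (b, m) :: r => if x = b then (x, m + 1) :: r else (x, 1) :: (b, m) :: r)
          = if x = b then (x, m + 1) :: r else (x, 1) :: (b, m) :: r from rfl]
      by_cases hxb : x = b
      · subst hxb
        rw [if_pos rfl]
        cases r with
        | nil => simp at hn ⊢; exact hn.1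
        | cons s r' => rw [List.getLast?_cons_cons] at hn ⊢; exact ⟨n, hn⟩
      · simp only [if_neg hxb]
        rw [List.getLast?_cons_cons]
        exact ⟨n, hn⟩

lemma replicate_dup : ∀ (n a : ℕ),
    (List.replicate n a).flatMap (fun v => [v, v]) = List.replicate (2 * n) a
  | 0, a => by simp
  | n + 1, a => by
    rw [List.replicate_succ, List.flatMap_cons, replicate_dup n a,
      show 2 * (n + 1) = (2 * n + 1) + 1 from by omega,
      List.replicate_succ, List.replicate_succ]
    simp

lemma flatMap_pair_dup : ∀ R : List (ℕ × ℕ),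
    ((R.flatMap fun p => [p.2, p.1]).flatMap fun v => [v, v])
      = R.flatMap fun p => [p.2, p.2, p.1, p.1]
  | [] => by simp
  | p :: R => by simp [flatMap_pair_dup R]

lemma dup_flatten : ∀ Q : List (ℕ × ℕ),
    ((Q.map fun p => List.replicate p.2 p.1).flatten).flatMap (fun v => [v, v])
      = ((Q.map fun p => ((p.1, 2 * p.2) : ℕ × ℕ)).map fun p => List.replicate p.2 p.1).flatten
  | [] => by simp
  | p :: Q => by
    simp only [List.map_cons, List.flatten_cons, List.flatMap_append, dup_flatten Q,
      replicate_dup]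


/-- One step of look-and-say-again preserves the shape `k ‖ dd` with `k`
satisfying `P` and ending in a run of base digit 2. -/
theorem lsa_tail_dd (d : ℕ) (hd9 : d ≤ 9) (hd : d ∉ ({1, 2, 4, 6} : Set ℕ))
    (k : List ℕ) (hk : propP k) (hlast : ∃ m : ℕ, (rle k).getLast? = some (2, m)) :
    ∃ k' : List ℕ, lsa (k ++ [d, d]) = k' ++ [d, d] ∧ propP k' ∧
      ∃ m : ℕ, (rle k').getLast? = some (2, m) := by
  obtain ⟨m0, hlast⟩ := hlast
  obtain ⟨hposR, hchR, hflR⟩ := rle_isRLE k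
  have hd2 : d ≠ 2 := by rintro rfl; exact hd (by simp)
  -- Step 1: rle (k ++ [d,d]) = rle k ++ [(d,2)]
  have h1 : rle (k ++ [d, d]) = rle k ++ [(d, 2)] := by
    apply rle_eq_of_isRLE
    refine ⟨?_, ?_, ?_⟩
    · intro p hp
      rcases List.mem_append.1 hp with h | h
      · exact hposR p h
      · simp at h; subst h; simp
    · refine hchR.append (by simp) ?_
      intro x hx y hy
      rw [hlast] at hx
      simp at hx hy
      subst hx; subst hy
      simp [Ne.symm hd2]
    · rw [List.map_append, List.flatten_append, ← hflR]
      simp [List.replicate]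
  set w : List ℕ := (rle k).flatMap (fun p => [p.2, p.1]) ++ [2] with hw
  set k' : List ℕ := ((rle k).flatMap fun p => [p.2, p.2, p.1, p.1]) ++ [2, 2] with hk'
  obtain ⟨hposQ, hchQ, hflQ⟩ := rle_isRLE w
  have hkw : k' = w.flatMap fun v => [v, v] := by
    rw [hk', hw, List.flatMap_append, flatMap_pair_dup]
    rfl
  have h2 : rle k' = (rle w).map fun p => (p.1, 2 * p.2) := by
    apply rle_eq_of_isRLE
    refine ⟨?_, ?_, ?_⟩
    · intro p hp
      obtain ⟨q, hq, rfl⟩ := List.mem_map.1 hp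
      have := hposQ q hq
      simp; omega
    · refine (List.isChain_map _).2 ?_
      exact hchQ
    · rw [hkw]
      conv_lhs => rw [hflQ]
      exact dup_flatten (rle w)
  refine ⟨k', ?_, ?_, ?_⟩
  · rw [lsa, h1]
    simp [hk', List.flatMap_append]
  · -- propP k'
    intro p hp
    rw [h2] at hp
    obtain ⟨q, hq, rfl⟩ := List.mem_map.1 hp
    have hinf : List.replicate q.2 q.1 <:+: w := by
      rw [hflQ]
      exact List.infix_of_mem_flatten (List.mem_map.2 ⟨q, hq, rfl⟩)
    have hq1 : (1:ℕ) ≤ q.2 := hposQ q hq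
    have hmemw : q.1 ∈ w := hinf.subset (by
      cases' n : q.2 with n
      · omega
      · rw [List.replicate_succ]; simp)
    constructor
    · show q.1 ∈ ({1, 2, 4, 6} : Set ℕ)
      rw [hw] at hmemw
      rcases List.mem_append.1 hmemw with h | h
      · obtain ⟨r, hr, hxr⟩ := List.mem_flatMap.1 h
        obtain ⟨hr1, hr2⟩ := hk r hr
        simp at hxr
        rcases hxr with h' | h'
        · rw [h']; rcases hr2 with h | h | h <;> simp [h]
        · rw [h']; exact hr1
      · simp at h; simp [h]
    · have hle : q.2 ≤ 3 := by
        by_contra hgt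
        push_neg at hgt
        apply nf_w (rle k) hchR q.1
        refine List.IsInfix.trans ?_ hinf
        refine ⟨[], List.replicate (q.2 - 4) q.1, ?_⟩
        rw [show List.replicate q.2 q.1 = List.replicate (4 + (q.2 - 4)) q.1 from by
          congr 1; omega, List.replicate_add]
        simp [List.replicate]
      show 2 * q.2 ∈ ({2, 4, 6} : Set ℕ)
      interval_cases q.2 <;> simp
  · obtain ⟨n, hn⟩ := rle_last ((rle k).flatMap fun p => [p.2, p.1]) 2
    refine ⟨2 * n, ?_⟩
    rw [h2, List.getLast?_map, hn]
    rfl
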